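/- Let X be a zero-dimensional metrizable compact space, D ⊆ X a nonempty closed subset, and f : D → X an injective continuous map with f(x) ≠ x for every x ∈ D. Then the continuous chromatic number of (X,G_f) belongs to {2,3}: there is a continuous 3-coloring of (X,G_f), and since G_f is nonempty there is no continuous 1-coloring. -/

import Mathlib

open TopologicalSpace
open scoped Classical Topology

/-- A *graph* on `X`: a symmetric irreflexive binary relation on `X`. -/
def IsGraph {X : Type*} (G : Set (X × X)) : Prop :=
  (∀ x y : X, (x, y) ∈ G → (y, x) ∈ G) ∧ ∀ x : X, (x, x) ∉ G

/-- `(X, G)` admits a continuous coloring with `n` colors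
(`Fin n` carries the discrete topology). -/
def HasContColoring {X : Type*} [TopologicalSpace X] (G : Set (X × X)) (n : ℕ) : Prop :=
  ∃ c : X → Fin n, Continuous c ∧ ∀ x y : X, (x, y) ∈ G → c x ≠ c y

/-- `(X, G)` admits a countable continuous coloring (`ℕ` is discrete). -/
def HasCtbleContColoring {X : Type*} [TopologicalSpace X] (G : Set (X × X)) : Prop :=
  ∃ c : X → ℕ, Continuous c ∧ ∀ x y : X, (x, y) ∈ G → c x ≠ c y

/-- `(X,G) ≼_c (Y,H)` : there is a continuous homomorphism. -/
def RedC {X Y : Type*} [TopologicalSpace X] [TopologicalSpace Y]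
    (G : Set (X × X)) (H : Set (Y × Y)) : Prop :=
  ∃ φ : X → Y, Continuous φ ∧ ∀ x y : X, (x, y) ∈ G → (φ x, φ y) ∈ H

/-- `(X,G) ≼^i_c (Y,H)` : there is an injective continuous homomorphism. -/
def RedIC {X Y : Type*} [TopologicalSpace X] [TopologicalSpace Y]
    (G : Set (X × X)) (H : Set (Y × Y)) : Prop :=
  ∃ φ : X → Y, Continuous φ ∧ Function.Injective φ ∧
    ∀ x y : X, (x, y) ∈ G → (φ x, φ y) ∈ H

/-- A space is zero-dimensional if the clopen sets form a basis. -/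
def ZeroDim (X : Type*) [TopologicalSpace X] : Prop :=
  IsTopologicalBasis {s : Set X | IsClopen s}

/-- zero-dimensional metrizable compact -/
def Is0DMC (X : Type*) [TopologicalSpace X] : Prop :=
  CompactSpace X ∧ MetrizableSpace X ∧ ZeroDim X

/-- zero-dimensional metrizable separable -/
def Is0DMS (X : Type*) [TopologicalSpace X] : Prop :=
  MetrizableSpace X ∧ SeparableSpace X ∧ ZeroDim X

/-- The graph induced by a partial function `f` with domain `D ⊆ X`:
`G_f = s(Graph(f)) \ Δ(X)`. -/
def PartialGraph {X : Type*} (D : Set X) (f : ↥D → X) : Set (X × X) :=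
  {p | p.1 ≠ p.2 ∧
    ((∃ h : p.1 ∈ D, f ⟨p.1, h⟩ = p.2) ∨ ∃ h : p.2 ∈ D, f ⟨p.2, h⟩ = p.1)}

/-- Refine an open 3-cover of a closed set by clopen sets. -/
private lemma clopen_refine3 {X : Type*} [TopologicalSpace X] [CompactSpace X]
    (hzd : IsTopologicalBasis {s : Set X | IsClopen s})
    (K G0 G1 G2 : Set X) (hK : IsClosed K)
    (h0 : IsOpen G0) (h1 : IsOpen G1) (h2 : IsOpen G2)
    (hcov : K ⊆ G0 ∪ G1 ∪ G2) :
    ∃ V0 V1 V2 : Set X, IsClopen V0 ∧ IsClopen V1 ∧ IsClopen V2 ∧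
      V0 ⊆ G0 ∧ V1 ⊆ G1 ∧ V2 ⊆ G2 ∧ K ⊆ V0 ∪ V1 ∪ V2 := by
  have key : ∀ x ∈ K, ∃ W : Set X, IsClopen W ∧ x ∈ W ∧
      (W ⊆ G0 ∨ W ⊆ G1 ∨ W ⊆ G2) := by
    intro x hx
    rcases hcov hx with (h | h) | h
    · obtain ⟨W, hW, hxW, hWs⟩ := hzd.exists_subset_of_mem_open h h0
      exact ⟨W, hW, hxW, Or.inl hWs⟩
    · obtain ⟨W, hW, hxW, hWs⟩ := hzd.exists_subset_of_mem_open h h1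
      exact ⟨W, hW, hxW, Or.inr (Or.inl hWs)⟩
    · obtain ⟨W, hW, hxW, hWs⟩ := hzd.exists_subset_of_mem_open h h2
      exact ⟨W, hW, hxW, Or.inr (Or.inr hWs)⟩
  choose! W hWc hWx hWs using key
  obtain ⟨t, htK, htcov⟩ := hK.isCompact.elim_nhds_subcover W
    (fun x hx => (hWc x hx).isOpen.mem_nhds (hWx x hx))
  refine ⟨⋃ x ∈ t.filter (fun x => W x ⊆ G0), W x,
    ⋃ x ∈ t.filter (fun x => ¬ W x ⊆ G0 ∧ W x ⊆ G1), W x,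
    ⋃ x ∈ t.filter (fun x => ¬ W x ⊆ G0 ∧ ¬ W x ⊆ G1), W x,
    ?_, ?_, ?_, ?_, ?_, ?_, ?_⟩
  · exact isClopen_biUnion_finset fun x hx => hWc x (htK x (Finset.mem_of_mem_filter x hx))
  · exact isClopen_biUnion_finset fun x hx => hWc x (htK x (Finset.mem_of_mem_filter x hx))
  · exact isClopen_biUnion_finset fun x hx => hWc x (htK x (Finset.mem_of_mem_filter x hx))
  · intro y hy
    simp only [Set.mem_iUnion, Finset.mem_filter] at hy
    obtain ⟨x, ⟨hxt, hx0⟩, hyx⟩ := hy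
    exact hx0 hyx
  · intro y hy
    simp only [Set.mem_iUnion, Finset.mem_filter] at hy
    obtain ⟨x, ⟨hxt, hx0, hx1⟩, hyx⟩ := hy
    exact hx1 hyx
  · intro y hy
    simp only [Set.mem_iUnion, Finset.mem_filter] at hy
    obtain ⟨x, ⟨hxt, hx0, hx1⟩, hyx⟩ := hy
    rcases hWs x (htK x hxt) with h | h | h
    · exact absurd h hx0
    · exact absurd h hx1
    · exact h hyx
  · intro y hy
    obtain ⟨x, hx⟩ := Set.mem_iUnion.mp (htcov hy)
    simp only [Set.mem_iUnion] at hx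
    obtain ⟨hxt, hyx⟩ := hx
    by_cases c0 : W x ⊆ G0
    · exact Or.inl (Or.inl (Set.mem_biUnion (Finset.mem_filter.mpr ⟨hxt, c0⟩) hyx))
    · by_cases c1 : W x ⊆ G1
      · exact Or.inl (Or.inr (Set.mem_biUnion (Finset.mem_filter.mpr ⟨hxt, c0, c1⟩) hyx))
      · exact Or.inr (Set.mem_biUnion (Finset.mem_filter.mpr ⟨hxt, c0, c1⟩) hyx)

private lemma step_lemma {X : Type*} [TopologicalSpace X] [CompactSpace X] [T2Space X]
    (hzd : IsTopologicalBasis {s : Set X | IsClopen s})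
    {D : Set X} (hD : IsClosed D)
    (f : ↥D → X) (hf : Continuous f) (hinj : Function.Injective f)
    (C A : Set X) (hC : IsClopen C) (hA : IsClopen A)
    (hAind : ∀ y : ↥D, ↑y ∈ A → f y ∉ A)
    (c : X → Fin 3) (hc : Continuous c)
    (hinv : ∀ y : ↥D, ↑y ∈ C → f y ∈ C → c ↑y ≠ c (f y)) :
    ∃ c' : X → Fin 3, Continuous c' ∧ (∀ x ∈ C, c' x = c x) ∧
      ∀ y : ↥D, ↑y ∈ C ∪ A → f y ∈ C ∪ A → c' ↑y ≠ c' (f y) := by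
  haveI : CompactSpace ↥D := isCompact_iff_compactSpace.mp hD.isCompact
  set F : Fin 3 → Set X := fun j =>
    (Subtype.val '' {y : ↥D | f y ∈ C ∧ c (f y) = j}) ∪
    (f '' {y : ↥D | ↑y ∈ C ∧ c ↑y = j}) with hF
  have hFclosed : ∀ j, IsClosed (F j) := by
    intro j
    apply IsClosed.union
    · refine (IsClosed.isCompact ?_).image continuous_subtype_val |>.isClosed
      have : {y : ↥D | f y ∈ C ∧ c (f y) = j} = f ⁻¹' (C ∩ c ⁻¹' {j}) := by
        ext y; simp [Set.mem_preimage]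
      rw [this]
      exact (hC.isClosed.inter (isClosed_singleton.preimage hc)).preimage hf
    · refine (IsClosed.isCompact ?_).image hf |>.isClosed
      have : {y : ↥D | ↑y ∈ C ∧ c ↑y = j} = Subtype.val ⁻¹' (C ∩ c ⁻¹' {j}) := by
        ext y; simp
      rw [this]
      exact (hC.isClosed.inter (isClosed_singleton.preimage hc)).preimage
        continuous_subtype_val
  -- each point is in at most two of the F j
  have hFmem : ∀ x, ¬ (x ∈ F 0 ∧ x ∈ F 1 ∧ x ∈ F 2) := by
    rintro x ⟨m0, m1, m2⟩
    have hfw : ∀ j k : Fin 3,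
        x ∈ Subtype.val '' {y : ↥D | f y ∈ C ∧ c (f y) = j} →
        x ∈ Subtype.val '' {y : ↥D | f y ∈ C ∧ c (f y) = k} → j = k := by
      rintro j k ⟨y, ⟨-, hy2⟩, hy3⟩ ⟨z, ⟨-, hz2⟩, hz3⟩
      have : y = z := Subtype.ext (hy3.trans hz3.symm)
      rw [← hy2, ← hz2, this]
    have hbw : ∀ j k : Fin 3,
        x ∈ f '' {y : ↥D | ↑y ∈ C ∧ c ↑y = j} →
        x ∈ f '' {y : ↥D | ↑y ∈ C ∧ c ↑y = k} → j = k := by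
      rintro j k ⟨y, ⟨-, hy2⟩, hy3⟩ ⟨z, ⟨-, hz2⟩, hz3⟩
      have : y = z := hinj (hy3.trans hz3.symm)
      rw [← hy2, ← hz2, this]
    rcases m0 with a0 | b0 <;> rcases m1 with a1 | b1 <;> rcases m2 with a2 | b2
    · exact absurd (hfw 0 1 a0 a1) (by decide)
    · exact absurd (hfw 0 1 a0 a1) (by decide)
    · exact absurd (hfw 0 2 a0 a2) (by decide)
    · exact absurd (hbw 1 2 b1 b2) (by decide)
    · exact absurd (hfw 1 2 a1 a2) (by decide)
    · exact absurd (hbw 0 2 b0 b2) (by decide)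
    · exact absurd (hbw 0 1 b0 b1) (by decide)
    · exact absurd (hbw 0 1 b0 b1) (by decide)
  have hcov : A ⊆ (A \ F 0) ∪ (A \ F 1) ∪ (A \ F 2) := by
    intro x hx
    by_cases h0 : x ∈ F 0
    · by_cases h1 : x ∈ F 1
      · exact Or.inr ⟨hx, fun h2 => hFmem x ⟨h0, h1, h2⟩⟩
      · exact Or.inl (Or.inr ⟨hx, h1⟩)
    · exact Or.inl (Or.inl ⟨hx, h0⟩)
  obtain ⟨V0, V1, V2, hV0, hV1, hV2, hV0s, hV1s, hV2s, hVcov⟩ :=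
    clopen_refine3 hzd A (A \ F 0) (A \ F 1) (A \ F 2) hA.isClosed
      (hA.isOpen.sdiff (hFclosed 0)) (hA.isOpen.sdiff (hFclosed 1))
      (hA.isOpen.sdiff (hFclosed 2)) hcov
  set c' : X → Fin 3 := fun x =>
    if x ∈ C then c x else if x ∈ V0 then 0 else if x ∈ V1 then 1 else 2 with hc'
  have hagree : ∀ x ∈ C, c' x = c x := fun x hx => if_pos hx
  have hcont : Continuous c' := by
    apply Continuous.if
    · intro a ha
      simp only [Set.setOf_mem_eq, hC.frontier_eq] at ha
      exact absurd ha (Set.notMem_empty a)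
    · exact hc
    · apply Continuous.if
      · intro a ha
        simp only [Set.setOf_mem_eq, hV0.frontier_eq] at ha
        exact absurd ha (Set.notMem_empty a)
      · exact continuous_const
      · apply Continuous.if
        · intro a ha
          simp only [Set.setOf_mem_eq, hV1.frontier_eq] at ha
          exact absurd ha (Set.notMem_empty a)
        · exact continuous_const
        · exact continuous_const
  have hsafe : ∀ x, x ∉ C → x ∈ A → x ∉ F (c' x) := by
    intro x hxC hxA
    have hx' : c' x = if x ∈ V0 then 0 else if x ∈ V1 then 1 else 2 := if_neg hxC
    rcases hVcov hxA with (h | h) | h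
    · rw [hx', if_pos h]; exact (hV0s h).2
    · by_cases h0 : x ∈ V0
      · rw [hx', if_pos h0]; exact (hV0s h0).2
      · rw [hx', if_neg h0, if_pos h]; exact (hV1s h).2
    · by_cases h0 : x ∈ V0
      · rw [hx', if_pos h0]; exact (hV0s h0).2
      · by_cases h1 : x ∈ V1
        · rw [hx', if_neg h0, if_pos h1]; exact (hV1s h1).2
        · rw [hx', if_neg h0, if_neg h1]; exact (hV2s h).2
  refine ⟨c', hcont, hagree, ?_⟩
  intro y hyU hfyU
  by_cases hy : (↑y : X) ∈ C <;> by_cases hfy : f y ∈ C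
  · rw [hagree _ hy, hagree _ hfy]; exact hinv y hy hfy
  · -- y ∈ C, f y ∉ C so f y ∈ A
    have hfyA : f y ∈ A := hfyU.resolve_left hfy
    have : f y ∈ F (c ↑y) := Or.inr ⟨y, ⟨hy, rfl⟩, rfl⟩
    intro heq
    rw [hagree _ hy] at heq
    exact hsafe (f y) hfy hfyA (heq ▸ this)
  · have hyA : (↑y : X) ∈ A := hyU.resolve_left hy
    have : (↑y : X) ∈ F (c (f y)) := Or.inl ⟨y, ⟨hfy, rfl⟩, rfl⟩
    intro heq
    rw [hagree _ hfy] at heq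
    exact hsafe ↑y hy hyA (heq.symm ▸ this)
  · have hyA : (↑y : X) ∈ A := hyU.resolve_left hy
    have hfyA : f y ∈ A := hfyU.resolve_left hfy
    exact absurd hfyA (hAind y hyA)

theorem stmt16 (X : Type*) [TopologicalSpace X] (h0 : Is0DMC X)
    (D : Set X) (hD : IsClosed D) (hne : D.Nonempty)
    (f : ↥D → X) (hf : Continuous f) (hinj : Function.Injective f)
    (hfpf : ∀ x : ↥D, f x ≠ ↑x) :
    HasContColoring (PartialGraph D f) 3 ∧ ¬ HasContColoring (PartialGraph D f) 1 := by
  obtain ⟨hcomp, hmet, hzd⟩ := h0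
  haveI := hcomp
  haveI := hmet
  constructor
  · -- clopen independent neighborhoods
    have indep_nbhd : ∀ x : X, ∃ U : Set X, IsClopen U ∧ x ∈ U ∧
        ∀ y : ↥D, ↑y ∈ U → f y ∉ U := by
      intro x
      by_cases hx : x ∈ D
      · obtain ⟨U₁, U₂, hU₁, hU₂, hfx, hxx, hdisj⟩ := t2_separation (hfpf ⟨x, hx⟩)
        have hpre : f ⁻¹' U₁ ∈ 𝓝 (⟨x, hx⟩ : ↥D) :=
          hf.continuousAt.preimage_mem_nhds (hU₁.mem_nhds hfx)
        obtain ⟨Wn, hWn, hWsub⟩ := (mem_nhds_subtype D ⟨x, hx⟩ (f ⁻¹' U₁)).mp hpre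
        obtain ⟨Wo, hWoWn, hWoo, hxWo⟩ := mem_nhds_iff.mp hWn
        obtain ⟨U, hUc, hxU, hUsub⟩ := hzd.exists_subset_of_mem_open
          (Set.mem_inter hxx hxWo) (hU₂.inter hWoo)
        refine ⟨U, hUc, hxU, fun y hy hfyU => ?_⟩
        have h1 : f y ∈ U₁ := hWsub (hWoWn (hUsub hy).2)
        have h2 : f y ∈ U₂ := (hUsub hfyU).1
        exact Set.disjoint_left.mp hdisj h1 h2
      · obtain ⟨U, hUc, hxU, hUsub⟩ := hzd.exists_subset_of_mem_open hx hD.isOpen_compl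
        exact ⟨U, hUc, hxU, fun y hy => absurd y.2 (hUsub hy)⟩
    choose U hUclopen hUmem hUind using indep_nbhd
    obtain ⟨t, -, htcov⟩ := isCompact_univ.elim_nhds_subcover U
      (fun x _ => (hUclopen x).isOpen.mem_nhds (hUmem x))
    have main : ∀ s : Finset X, ∃ c : X → Fin 3, Continuous c ∧
        ∀ y : ↥D, ↑y ∈ (⋃ x ∈ s, U x) → f y ∈ (⋃ x ∈ s, U x) → c ↑y ≠ c (f y) := by
      intro s
      induction s using Finset.induction with
      | empty => exact ⟨fun _ => 0, continuous_const, by simp⟩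
      | insert _ _ ha ih =>
        obtain ⟨c, hc, hinv⟩ := ih
        rename_i a s'
        have hCs : IsClopen (⋃ x ∈ s', U x) :=
          isClopen_biUnion_finset (fun x _ => hUclopen x)
        obtain ⟨c', hc', -, hinv'⟩ := step_lemma hzd hD f hf hinj
          (⋃ x ∈ s', U x) (U a) hCs (hUclopen a) (hUind a) c hc hinv
        refine ⟨c', hc', ?_⟩
        intro y hy hfy
        rw [Finset.set_biUnion_insert, Set.union_comm] at hy hfy
        exact hinv' y hy hfy
    obtain ⟨c, hc, hinv⟩ := main t
    refine ⟨c, hc, ?_⟩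
    rintro x y ⟨hne', hor⟩
    rcases hor with ⟨h, heq⟩ | ⟨h, heq⟩
    · have := hinv ⟨x, h⟩ (htcov (Set.mem_univ x)) (htcov (Set.mem_univ (f ⟨x, h⟩)))
      rwa [heq] at this
    · have := hinv ⟨y, h⟩ (htcov (Set.mem_univ y)) (htcov (Set.mem_univ (f ⟨y, h⟩)))
      rw [heq] at this
      exact this.symm
  · rintro ⟨c, -, hc⟩
    obtain ⟨x0, hx0⟩ := hne
    exact hc x0 (f ⟨x0, hx0⟩) ⟨(hfpf ⟨x0, hx0⟩).symm, Or.inl ⟨hx0, rfl⟩⟩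
      (Subsingleton.elim _ _)
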